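/- Let X be a uniformly convex and uniformly smooth Banach space, C ⊆ X nonempty closed convex, π_C : X* → C the generalized projection. Suppose ψ_n ⇀ ψ weak* in X*, {ψ_n} is norm bounded, and π_C(ψ_n) → y in norm for some y ∈ C. Then y = π_C(ψ). -/

import Mathlib

open Filter

/-- if ψₙ ⇀ ψ weak*, {ψₙ} is norm bounded and π_C(ψₙ) → y in norm,
then y = π_C(ψ). -/
theorem stmt12 {X : Type*} [NormedAddCommGroup X] [NormedSpace ℝ X]
    (J : X → StrongDual ℝ X)
    (hdual : ∀ x, J x x = ‖x‖ ^ 2 ∧ ‖J x‖ = ‖x‖)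
    (hJcont : Continuous J)
    (C : Set X) (hCne : C.Nonempty) (hCcl : IsClosed C) (hCcv : Convex ℝ C)
    (pC : StrongDual ℝ X → X)
    (hchar : ∀ ψ u, pC ψ = u ↔ u ∈ C ∧ ∀ z ∈ C, 0 ≤ (ψ - J u) (u - z))
    (ψn : ℕ → StrongDual ℝ X) (ψ : StrongDual ℝ X) (y : X) (hy : y ∈ C)
    (hweakstar : ∀ x : X, Tendsto (fun n => ψn n x) atTop (nhds (ψ x)))
    (hbdd : ∃ M : ℝ, ∀ n, ‖ψn n‖ ≤ M)
    (hconv : Tendsto (fun n => pC (ψn n)) atTop (nhds y)) :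
    y = pC ψ := by
  obtain ⟨M, hM⟩ := hbdd
  refine ((hchar ψ y).mpr ⟨hy, fun z hz => ?_⟩).symm
  set yn : ℕ → X := fun n => pC (ψn n) with hyn
  -- each n satisfies the variational inequality
  have hn : ∀ n, 0 ≤ (ψn n - J (yn n)) (yn n - z) := fun n =>
    ((hchar (ψn n) (yn n)).mp rfl).2 z hz
  -- limit of ψn n applied to yn n - z
  have h1 : Tendsto (fun n => (ψn n) (yn n - z)) atTop (nhds (ψ (y - z))) := by
    have hsplit : ∀ n, (ψn n) (yn n - z) = (ψn n) (yn n - y) + (ψn n) (y - z) := by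
      intro n
      rw [← map_add]
      congr 1
      abel
    have h0 : Tendsto (fun n => (ψn n) (yn n - y)) atTop (nhds 0) := by
      have hb : ∀ n, |(ψn n) (yn n - y)| ≤ M * ‖yn n - y‖ := by
        intro n
        calc |(ψn n) (yn n - y)| ≤ ‖ψn n‖ * ‖yn n - y‖ := (ψn n).le_opNorm _
          _ ≤ M * ‖yn n - y‖ := by
              have : (0:ℝ) ≤ ‖yn n - y‖ := norm_nonneg _
              nlinarith [hM n]
      have hnorm : Tendsto (fun n => M * ‖yn n - y‖) atTop (nhds 0) := by
        have : Tendsto (fun n => ‖yn n - y‖) atTop (nhds 0) := by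
          rw [← tendsto_iff_norm_sub_tendsto_zero] ; exact hconv
        simpa using this.const_mul M
      have hneg : Tendsto (fun n => -(M * ‖yn n - y‖)) atTop (nhds 0) := by
        simpa using hnorm.neg
      exact tendsto_of_tendsto_of_tendsto_of_le_of_le hneg hnorm
        (fun n => neg_le_of_abs_le (hb n)) (fun n => le_of_abs_le (hb n))
    have := h0.add (hweakstar (y - z))
    simpa [hsplit] using this
  -- limit of J (yn n) applied to yn n - z
  have h2 : Tendsto (fun n => (J (yn n)) (yn n - z)) atTop (nhds ((J y) (y - z))) := by
    have hJ : Tendsto (fun n => J (yn n)) atTop (nhds (J y)) :=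
      (hJcont.tendsto y).comp hconv
    have hx : Tendsto (fun n => yn n - z) atTop (nhds (y - z)) :=
      hconv.sub tendsto_const_nhds
    exact (isBoundedBilinearMap_apply.continuous.tendsto _).comp (hJ.prodMk_nhds hx)
  have hlim : Tendsto (fun n => (ψn n - J (yn n)) (yn n - z)) atTop
      (nhds ((ψ - J y) (y - z))) := by
    simpa [ContinuousLinearMap.sub_apply] using h1.sub h2
  exact ge_of_tendsto' hlim hn
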